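/- Let W ⊆ {0,1}^ω be the set of sequences (σ_k)_{k≥1} with σ₁ = 0 such that there exist j ≥ 1 and k ≥ 1 with σ_j = 1 and σ_{k+1} = σ_{k+2} = ⋯ = σ_{k+j} = 1. In the Banach–Mazur game (G_{0,1}, 0, W), Player 0 has a move-counting winning strategy (namely h(v,n) = 1ⁿ), but for every b ≥ 1 Player 0 has no b-bounded winning strategy. -/

import Mathlib

open MeasureTheory
open scoped ENNReal NNReal

namespace BMGame

variable {V : Type*}

/-- The prefix of length `n` of the infinite sequence `ρ`. -/
def pref (ρ : ℕ → V) (n : ℕ) : List V := (List.range n).map ρ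

/-- `ρ` is an infinite path of the graph `E` starting at `v₀`. -/
def IsPlay (E : V → V → Prop) (v₀ : V) (ρ : ℕ → V) : Prop :=
  ρ 0 = v₀ ∧ ∀ n, E (ρ n) (ρ (n + 1))

/-- `π` is a nonempty finite path of the graph `E` starting at `v₀` (a position of the game). -/
def IsPos (E : V → V → Prop) (v₀ : V) (π : List V) : Prop :=
  π.head? = some v₀ ∧ π.Chain' E

/-- A strategy for player 0 assigns to each position the (nonempty) block of vertices
appended by player 0's move; `(π ++ f π).Chain' E` says that this block is a path
starting at the last vertex of `π`. -/
def IsStrategy (E : V → V → Prop) (v₀ : V) (f : List V → List V) : Prop :=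
  ∀ π, IsPos E v₀ π → f π ≠ [] ∧ (π ++ f π).Chain' E

/-- The play `ρ` is consistent with the strategy `f`: there are cut points
`c 0, c 1, …` (the lengths of the prefixes built after each move of player 1) such that
after each such prefix player 0 plays according to `f`, and player 1 then appends a
nonempty block. -/
def ConsGen (f : List V → List V) (ρ : ℕ → V) : Prop :=
  ∃ c : ℕ → ℕ, 1 ≤ c 0 ∧ ∀ i,
    pref ρ (c i + (f (pref ρ (c i))).length) = pref ρ (c i) ++ f (pref ρ (c i)) ∧
    c i + (f (pref ρ (c i))).length < c (i + 1)

/-- `f` is a winning strategy for player 0 in the Banach–Mazur game `(E, v₀, W)`. -/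
def WinningStrategy (E : V → V → Prop) (v₀ : V) (W : Set (ℕ → V))
    (f : List V → List V) : Prop :=
  IsStrategy E v₀ f ∧ ∀ ρ, IsPlay E v₀ ρ → ConsGen f ρ → ρ ∈ W

/-- The strategy `f` is `b`-bounded: each of its moves has length at most `b`. -/
def BoundedBy (E : V → V → Prop) (v₀ : V) (b : ℕ) (f : List V → List V) : Prop :=
  ∀ π, IsPos E v₀ π → (f π).length ≤ b

/-- A positional strategy assigns to each vertex the nonempty block appended. -/
def IsPositional (E : V → V → Prop) (f : V → List V) : Prop :=
  ∀ v, f v ≠ [] ∧ (v :: f v).Chain' E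

/-- Consistency with a positional strategy: after each prefix chosen by player 1,
player 0 plays `f` of the current (last) vertex. -/
def ConsPositional (f : V → List V) (ρ : ℕ → V) : Prop :=
  ∃ c : ℕ → ℕ, 1 ≤ c 0 ∧ ∀ i,
    pref ρ (c i + (f (ρ (c i - 1))).length) = pref ρ (c i) ++ f (ρ (c i - 1)) ∧
    c i + (f (ρ (c i - 1))).length < c (i + 1)

def PositionalWinning (E : V → V → Prop) (v₀ : V) (W : Set (ℕ → V)) (f : V → List V) : Prop :=
  IsPositional E f ∧ ∀ ρ, IsPlay E v₀ ρ → ConsPositional f ρ → ρ ∈ W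

/-- Structural requirement shared by move-counting and length-counting strategies:
for `n ≥ 1`, `h v n` is a nonempty block forming a path from `v`. -/
def IsCountingStrategy (E : V → V → Prop) (h : V → ℕ → List V) : Prop :=
  ∀ v n, 1 ≤ n → h v n ≠ [] ∧ (v :: h v n).Chain' E

/-- Consistency with a move-counting strategy: at its `i`-th move (`i ≥ 1`) player 0 plays
`h (current vertex) i`. -/
def ConsMoveCounting (h : V → ℕ → List V) (ρ : ℕ → V) : Prop :=
  ∃ c : ℕ → ℕ, 1 ≤ c 0 ∧ ∀ i,
    pref ρ (c i + (h (ρ (c i - 1)) (i + 1)).length) = pref ρ (c i) ++ h (ρ (c i - 1)) (i + 1) ∧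
    c i + (h (ρ (c i - 1)) (i + 1)).length < c (i + 1)

def MoveCountingWinning (E : V → V → Prop) (v₀ : V) (W : Set (ℕ → V))
    (h : V → ℕ → List V) : Prop :=
  IsCountingStrategy E h ∧ ∀ ρ, IsPlay E v₀ ρ → ConsMoveCounting h ρ → ρ ∈ W

/-- Consistency with a length-counting strategy: after a prefix of length `c i`
player 0 plays `h (current vertex) (c i)`. -/
def ConsLengthCounting (h : V → ℕ → List V) (ρ : ℕ → V) : Prop :=
  ∃ c : ℕ → ℕ, 1 ≤ c 0 ∧ ∀ i,
    pref ρ (c i + (h (ρ (c i - 1)) (c i)).length) = pref ρ (c i) ++ h (ρ (c i - 1)) (c i) ∧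
    c i + (h (ρ (c i - 1)) (c i)).length < c (i + 1)

def LengthCountingWinning (E : V → V → Prop) (v₀ : V) (W : Set (ℕ → V))
    (h : V → ℕ → List V) : Prop :=
  IsCountingStrategy E h ∧ ∀ ρ, IsPlay E v₀ ρ → ConsLengthCounting h ρ → ρ ∈ W

/-- The segment `ρ a, ρ (a+1), …, ρ (b-1)` of an infinite sequence. -/
def seg (ρ : ℕ → V) (a b : ℕ) : List V := (List.range (b - a)).map fun j => ρ (a + j)

/-- A last-move strategy is defined on all nonempty finite paths of the graph. -/
def IsLastMove (E : V → V → Prop) (g : List V → List V) : Prop :=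
  ∀ π, π ≠ [] → π.Chain' E → g π ≠ [] ∧ (π ++ g π).Chain' E

/-- Consistency with the last-move strategy `g`: the play decomposes as
`π₁ g(π₁) π₂ g(π₂) ⋯` where the `πᵢ` are the (nonempty) moves of player 1. -/
def ConsLastMove (g : List V → List V) (ρ : ℕ → V) : Prop :=
  ∃ s e : ℕ → ℕ, s 0 = 0 ∧ (∀ i, s i < e i) ∧ ∀ i,
    seg ρ (e i) (e i + (g (seg ρ (s i) (e i))).length) = g (seg ρ (s i) (e i)) ∧
    s (i + 1) = e i + (g (seg ρ (s i) (e i))).length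

def LastMoveWinning (E : V → V → Prop) (v₀ : V) (W : Set (ℕ → V)) (g : List V → List V) : Prop :=
  IsLastMove E g ∧ ∀ ρ, IsPlay E v₀ ρ → ConsLastMove g ρ → ρ ∈ W

/-- The cylinder generated by the finite word `π`. -/
def Cyl (π : List V) : Set (ℕ → V) := {ρ | pref ρ π.length = π}

/-- One-step transition probabilities obtained from the weights `w`. -/
noncomputable def transP [Fintype V] (E : V → V → Prop) (w : V → V → ℝ≥0) (u v : V) : ℝ≥0∞ := by
  classical
  exact if E u v then
    (w u v : ℝ≥0∞) / ∑ x ∈ Finset.univ.filter (fun x => E u x), (w u x : ℝ≥0∞)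
  else 0

/-- The probability of the cylinder generated by a finite word: the product of the
one-step transition probabilities along it. -/
noncomputable def pathP [Fintype V] (E : V → V → Prop) (w : V → V → ℝ≥0) (π : List V) : ℝ≥0∞ :=
  ((π.zip π.tail).map fun q => transP E w q.1 q.2).prod

/-- `P` is the reasonable probability measure associated with the weights `w`. -/
def IsReasonable [Fintype V] [MeasurableSpace (ℕ → V)] (E : V → V → Prop) (v₀ : V)
    (w : V → V → ℝ≥0) (P : Measure (ℕ → V)) : Prop :=
  IsProbabilityMeasure P ∧ ∀ π : List V, π.head? = some v₀ → P (Cyl π) = pathP E w π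

/-- `Ps` is a legal move of player 0 in the generalised game `G_α` at position `π`: a
finite nonempty set of nonempty finite paths from the last vertex of `π` whose union of
cylinders has conditional probability at least `α` given `Cyl π`. -/
def LegalProposal [MeasurableSpace (ℕ → V)] (E : V → V → Prop) (P : Measure (ℕ → V)) (α : ℝ)
    (π : List V) (Ps : Finset (List V)) : Prop :=
  Ps.Nonempty ∧ (∀ τ ∈ Ps, τ ≠ [] ∧ (π ++ τ).Chain' E) ∧
    ENNReal.ofReal α ≤ P (⋃ τ ∈ Ps, Cyl (π ++ τ)) / P (Cyl π)

/-- An α-strategy for player 0. -/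
def IsAlphaStrategy [MeasurableSpace (ℕ → V)] (E : V → V → Prop) (v₀ : V) (P : Measure (ℕ → V))
    (α : ℝ) (f : List V → Finset (List V)) : Prop :=
  ∀ π, IsPos E v₀ π → LegalProposal E P α π (f π)

/-- Consistency with an α-strategy: at each stage, player 1 picks some element of the
set proposed by player 0 and appends a nonempty block after it. -/
def ConsAlpha (f : List V → Finset (List V)) (ρ : ℕ → V) : Prop :=
  ∃ c : ℕ → ℕ, 1 ≤ c 0 ∧ ∀ i, ∃ τ ∈ f (pref ρ (c i)),
    pref ρ (c i + τ.length) = pref ρ (c i) ++ τ ∧ c i + τ.length < c (i + 1)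

def AlphaWinning [MeasurableSpace (ℕ → V)] (E : V → V → Prop) (v₀ : V) (P : Measure (ℕ → V))
    (α : ℝ) (W : Set (ℕ → V)) (f : List V → Finset (List V)) : Prop :=
  IsAlphaStrategy E v₀ P α f ∧ ∀ ρ, IsPlay E v₀ ρ → ConsAlpha f ρ → ρ ∈ W

/-- A strategy for player 1 in the generalised game `G_α` consists of an initial path and,
for each position together with a legal proposal of player 0, the selected element of the
proposal and the next (nonempty) block played by player 1. -/
def IsP1Strategy [MeasurableSpace (ℕ → V)] (E : V → V → Prop) (v₀ : V) (P : Measure (ℕ → V))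
    (α : ℝ) (init : List V) (g : List V → Finset (List V) → List V × List V) : Prop :=
  IsPos E v₀ init ∧
    ∀ π Ps, IsPos E v₀ π → LegalProposal E P α π Ps →
      (g π Ps).1 ∈ Ps ∧ (g π Ps).2 ≠ [] ∧ (π ++ ((g π Ps).1 ++ (g π Ps).2)).Chain' E

/-- Consistency of a play with player 1's strategy `(init, g)`:
there is a sequence of legal proposals of player 0 generating the play. -/
def ConsP1 [MeasurableSpace (ℕ → V)] (E : V → V → Prop) (P : Measure (ℕ → V)) (α : ℝ)
    (init : List V) (g : List V → Finset (List V) → List V × List V) (ρ : ℕ → V) : Prop :=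
  ∃ (Ps : ℕ → Finset (List V)) (p : ℕ → List V), p 0 = init ∧
    (∀ n, pref ρ (p n).length = p n) ∧
    ∀ n, LegalProposal E P α (p n) (Ps n) ∧
      p (n + 1) = p n ++ ((g (p n) (Ps n)).1 ++ (g (p n) (Ps n)).2)

def P1Winning [MeasurableSpace (ℕ → V)] (E : V → V → Prop) (v₀ : V) (P : Measure (ℕ → V))
    (α : ℝ) (W : Set (ℕ → V)) (init : List V)
    (g : List V → Finset (List V) → List V × List V) : Prop :=
  IsP1Strategy E v₀ P α init g ∧ ∀ ρ, IsPlay E v₀ ρ → ConsP1 E P α init g ρ → ρ ∉ W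

/-- A union of cylinders, i.e. an open subset of the space of sequences. -/
def IsCylOpen (U : Set (ℕ → V)) : Prop :=
  ∃ S : Set (List V), U = ⋃ π ∈ S, Cyl π

/-- `W` is a countable intersection of open subsets of the space `Paths (G, v₀)`. -/
def IsCountableInterOfOpens (E : V → V → Prop) (v₀ : V) (W : Set (ℕ → V)) : Prop :=
  ∃ U : ℕ → Set (ℕ → V), (∀ n, IsCylOpen (U n)) ∧
    W = {ρ | IsPlay E v₀ ρ} ∩ ⋂ n, U n

/-- For every `n`, the concatenation of the blocks `u 0, …, u (n-1)` is a prefix of `ρ`. -/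
def AgreesWithBlocks (ρ : ℕ → V) (u : ℕ → List V) : Prop :=
  ∀ n, pref ρ (((List.range n).map u).flatten).length = ((List.range n).map u).flatten

end BMGame

open BMGame

/-- The complete directed graph on `{0,1}` (all edges, including self-loops). -/
def E2 : Fin 2 → Fin 2 → Prop := fun _ _ => True

/-- The winning condition of Example `nobound`: sequences starting with `0` containing a
block of consecutive `1`'s strictly longer than the initial block of `0`'s, i.e.
`σ₁ = 0` and there are `j ≥ 1`, `k ≥ 1` with `σ_j = 1` and `σ_{k+1} = ⋯ = σ_{k+j} = 1`
(sequences are `0`-indexed here, `σ_i = ρ (i - 1)`). -/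
def W1 : Set (ℕ → Fin 2) :=
  {ρ | ρ 0 = 0 ∧ ∃ j k : ℕ, 1 ≤ j ∧ 1 ≤ k ∧ ρ (j - 1) = 1 ∧
    ∀ i, 1 ≤ i → i ≤ j → ρ (k + i - 1) = 1}


section Aux

lemma pref_length' {V : Type*} (ρ : ℕ → V) (n : ℕ) : (pref ρ n).length = n := by
  simp [pref]

lemma pref_getElem' {V : Type*} (ρ : ℕ → V) (n m : ℕ) (h : m < (pref ρ n).length) :
    (pref ρ n)[m] = ρ m := by
  simp [pref]

lemma chain'_E2 (l : List (Fin 2)) : l.Chain' E2 := by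
  induction l with
  | nil => exact List.isChain_nil
  | cons a t ih =>
    cases t with
    | nil => exact List.isChain_singleton _
    | cons b s => exact List.isChain_cons_cons.mpr ⟨trivial, ih⟩

lemma extract' {ρ : ℕ → Fin 2} {a : ℕ} {l : List (Fin 2)}
    (h : pref ρ (a + l.length) = pref ρ a ++ l) (t : ℕ) (ht : t < l.length) :
    ρ (a + t) = l[t] := by
  have hidx : a + t < (pref ρ a ++ l).length := by simp [pref_length']; omega
  calc ρ (a + t)
      = (pref ρ (a + l.length))[a + t]'(by simp [pref_length']; omega) :=
        (pref_getElem' _ _ _ _).symm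
    _ = (pref ρ a ++ l)[a + t]'hidx := List.getElem_of_eq h _
    _ = l[t] := by
        rw [List.getElem_append_right (by simp [pref_length'])]
        congr 1
        simp [pref_length']

end Aux

/-- In the game `(G_{0,1}, 0, W1)`, Player 0 has a move-counting winning strategy, but
has no `b`-bounded winning strategy for any `b ≥ 1`. -/
theorem stmt1 :
    (∃ h : Fin 2 → ℕ → List (Fin 2), MoveCountingWinning E2 0 W1 h) ∧
    ∀ b : ℕ, 1 ≤ b →
      ¬ ∃ f : List (Fin 2) → List (Fin 2), WinningStrategy E2 0 W1 f ∧ BoundedBy E2 0 b f := by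
  constructor
  · -- Part 1: move-counting strategy h v n = replicate n 1
    refine ⟨fun _ n => List.replicate n 1, ?_, ?_⟩
    · intro v n hn
      exact ⟨by simp; omega, chain'_E2 _⟩
    · rintro ρ hplay ⟨c, hc0, hc⟩
      have hmono : StrictMono c := by
        apply strictMono_nat_of_lt_succ
        intro i
        have := (hc i).2
        omega
      have key : ∀ i t, t < i + 1 → ρ (c i + t) = 1 := by
        intro i t ht
        have h := (hc i).1
        have := extract' (l := List.replicate (i+1) (1 : Fin 2))
          (by simpa using h) t (by simp; omega)
        simpa using this
      have hc00 : c 0 ≤ c (c 0) := hmono.monotone (Nat.zero_le _)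
      refine ⟨hplay.1, c 0 + 1, c (c 0), by omega, by omega, ?_, ?_⟩
      · simpa using key 0 0 (by omega)
      · intro i hi1 hij
        have ht : i - 1 < c 0 + 1 := by omega
        have harith : c (c 0) + i - 1 = c (c 0) + (i - 1) := by omega
        rw [harith]
        exact key (c 0) (i - 1) ht
  · -- Part 2: no b-bounded winning strategy
    rintro b hb ⟨f, ⟨hstrat, hwin⟩, hbdd⟩
    set p : ℕ → List (Fin 2) :=
      fun n => Nat.rec (List.replicate (b+2) 0) (fun _ q => q ++ f q ++ [0]) n with hp
    have hpsucc : ∀ n, p (n+1) = p n ++ f (p n) ++ [0] := fun n => rfl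
    have hl0 : (p 0).length = b + 2 := by simp [hp]
    have hhead : ∀ n, (p n).head? = some 0 := by
      intro n
      induction n with
      | zero =>
        show (List.replicate (b+2) (0 : Fin 2)).head? = some 0
        rw [List.replicate_succ]
        rfl
      | succ n ih =>
        rw [hpsucc]
        obtain ⟨t, htl⟩ : ∃ t, p n = (0 : Fin 2) :: t := by
          cases hpn : p n with
          | nil => rw [hpn] at ih; simp at ih
          | cons a t =>
            rw [hpn] at ih
            simp at ih
            exact ⟨t, by rw [ih]⟩
        rw [htl]
        simp
    have hpos : ∀ n, IsPos E2 0 (p n) := fun n => ⟨hhead n, chain'_E2 _⟩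
    have hflen1 : ∀ n, 1 ≤ (f (p n)).length := fun n =>
      List.length_pos_iff.mpr (hstrat (p n) (hpos n)).1
    have hflenb : ∀ n, (f (p n)).length ≤ b := fun n => hbdd (p n) (hpos n)
    have hlensucc : ∀ n, (p (n+1)).length = (p n).length + (f (p n)).length + 1 := by
      intro n
      rw [hpsucc]
      simp
      omega
    have hlenlb : ∀ n, b + 2 + n ≤ (p n).length := by
      intro n
      induction n with
      | zero => omega
      | succ n ih =>
        have h1 := hlensucc n
        have h2 := hflen1 n
        omega
    have hprefix : ∀ m n, m ≤ n → p m <+: p n := by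
      intro m n hmn
      obtain ⟨k, rfl⟩ := Nat.exists_eq_add_of_le hmn
      clear hmn
      induction k with
      | zero => simp
      | succ k ih =>
        refine ih.trans ?_
        rw [show m + (k+1) = (m+k) + 1 from rfl, hpsucc]
        exact ⟨f (p (m+k)) ++ [0], by rw [List.append_assoc]⟩
    -- the play
    set ρ : ℕ → Fin 2 := fun n => (p (n+1)).getD n 0 with hρ
    have hρel : ∀ n m (h : m < (p n).length), ρ m = (p n)[m] := by
      intro n m h
      have hm1 : m < (p (m+1)).length := by have := hlenlb (m+1); omega
      have h1 : ρ m = (p (m+1))[m] := List.getD_eq_getElem _ _ hm1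
      rcases le_total n (m+1) with hle | hle
      · rw [h1, ((hprefix n (m+1) hle).getElem h).symm]
      · rw [h1, (hprefix (m+1) n hle).getElem hm1]
    have hpref : ∀ n m, m ≤ (p n).length → pref ρ m = (p n).take m := by
      intro n m hm
      apply List.ext_getElem
      · simp [pref_length']; omega
      · intro i h1 h2
        rw [pref_getElem' ρ m i h1]
        rw [List.getElem_take]
        exact hρel n i (by simp [pref_length'] at h1; omega)
    have hprefp : ∀ n, pref ρ ((p n).length) = p n := by
      intro n
      rw [hpref n _ le_rfl, List.take_length]
    have hplay : IsPlay E2 0 ρ := by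
      constructor
      · have h0 : (0:ℕ) < (p 0).length := by omega
        rw [hρel 0 0 h0]
        have : (p 0)[0]'h0 = (List.replicate (b+2) (0:Fin 2))[0]'(by simp [hl0]) :=
          List.getElem_of_eq rfl _
        rw [this, List.getElem_replicate]
      · intro n; trivial
    have hcons : ConsGen f ρ := by
      refine ⟨fun i => (p i).length, ?_, fun i => ?_⟩
      · show 1 ≤ (p 0).length
        omega
      show pref ρ ((p i).length + (f (pref ρ ((p i).length))).length) =
          pref ρ ((p i).length) ++ f (pref ρ ((p i).length)) ∧
          (p i).length + (f (pref ρ ((p i).length))).length < (p (i+1)).length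
      rw [hprefp i]
      constructor
      · have hle : (p i).length + (f (p i)).length ≤ (p (i+1)).length := by
          have := hlensucc i; omega
        rw [hpref (i+1) _ hle, hpsucc]
        rw [← List.length_append (as := p i) (bs := f (p i))]
        exact List.take_left
      · have := hlensucc i; omega
    have hW := hwin ρ hplay hcons
    obtain ⟨-, j, k, hj1, hk1, hj, hones⟩ := hW
    -- small positions are zero
    have hzero : ∀ m, m < b + 2 → ρ m = 0 := by
      intro m hm
      have h0 : m < (p 0).length := by omega
      rw [hρel 0 m h0]
      have : (p 0)[m]'h0 = (List.replicate (b+2) (0:Fin 2))[m]'(by simpa [hl0] using h0) :=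
        List.getElem_of_eq rfl _
      rw [this, List.getElem_replicate]
    -- every window of length b+1 contains a zero
    have hwindow : ∀ m, ∃ z, m ≤ z ∧ z ≤ m + b ∧ ρ z = 0 := by
      have aux : ∀ n m, m < (p n).length → ∃ z, m ≤ z ∧ z ≤ m + b ∧ ρ z = 0 := by
        intro n
        induction n with
        | zero =>
          intro m hm
          exact ⟨m, le_rfl, by omega, hzero m (by omega)⟩
        | succ n ih =>
          intro m hm
          rcases lt_or_ge m (p n).length with h | h
          · exact ih m h
          · have hls := hlensucc n
            set z := (p n).length + (f (p n)).length with hzdef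
            have hz : z < (p (n+1)).length := by omega
            refine ⟨z, by omega, by have := hflenb n; omega, ?_⟩
            rw [hρel (n+1) z hz]
            have he : (p (n+1))[z]'hz =
                ((p n ++ f (p n)) ++ [0])[z]'(by simp; omega) :=
              List.getElem_of_eq (hpsucc n) _
            rw [he, List.getElem_append_right (by simp; omega)]
            simp
      intro m
      exact aux (m+1) m (by have := hlenlb (m+1); omega)
    -- derive contradiction
    have hjbig : b + 1 ≤ j := by
      by_contra hlt
      have h2 := hzero (j-1) (by omega)
      rw [hj] at h2
      exact absurd h2 (by decide)
    obtain ⟨z, hz1, hz2, hz0⟩ := hwindow k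
    have hone := hones (z - k + 1) (by omega) (by omega)
    have heq : k + (z - k + 1) - 1 = z := by omega
    rw [heq] at hone
    rw [hone] at hz0
    exact absurd hz0 (by decide)
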